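/- Let A, B ∈ ℂ^{m×n} and W ∈ ℂ^{n×m} with (A·W)·(B·W) = (B·W)·(A·W), and let k be a natural number with k = max{ind(AW), ind(BW), ind(AWBW)}. Suppose Y₃ ∈ ℂ^{m×n} is a minimal rank W-weighted weak Drazin inverse of B (so Y₃·W·(B·W)^{k+1} = (B·W)^k and rank(Y₃) = rank((B·W)^k)), Z₂ ∈ ℂ^{m×n} is a minimal rank W-weighted weak Drazin inverse of A (so Z₂·W·(A·W)^{k+1} = (A·W)^k and rank(Z₂) = rank((A·W)^k)), and (Y₃·W)·(A·W) = (A·W)·(Y₃·W). Then Y₃·W·Z₂ is a minimal rank W-weighted weak Drazin inverse of A·W·B, i.e. (Y₃·W·Z₂)·W·(A·W·B·W)^{k+1} = (A·W·B·W)^k and rank(Y₃·W·Z₂) = rank((A·W·B·W)^k). -/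
import Mathlib


open Matrix

/-- The index of a square complex matrix: the least `j` with `rank (M^j) = rank (M^(j+1))`. -/
noncomputable def matIndex {p : ℕ} (M : Matrix (Fin p) (Fin p) ℂ) : ℕ :=
  sInf {j : ℕ | (M ^ j).rank = (M ^ (j + 1)).rank}

/-- The column space of a complex matrix: the range of `v ↦ M *ᵥ v`. -/
noncomputable def colSpace {a b : ℕ} (M : Matrix (Fin a) (Fin b) ℂ) :
    Submodule ℂ (Fin a → ℂ) :=
  LinearMap.range M.mulVecLin

/-- The null space of a complex matrix: the kernel of `v ↦ M *ᵥ v`. -/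
noncomputable def nullSpace {a b : ℕ} (M : Matrix (Fin a) (Fin b) ℂ) :
    Submodule ℂ (Fin b → ℂ) :=
  LinearMap.ker M.mulVecLin


lemma factor_of_range_le {m n : ℕ} (P : Matrix (Fin m) (Fin m) ℂ) (Z : Matrix (Fin m) (Fin n) ℂ)
    (h : LinearMap.range Z.mulVecLin ≤ LinearMap.range P.mulVecLin) :
    ∃ U : Matrix (Fin m) (Fin n) ℂ, Z = P * U := by
  have hcol : ∀ j : Fin n, ∃ u : Fin m → ℂ, P *ᵥ u = fun i => Z i j := by
    intro j
    have hm : (fun i => Z i j) ∈ LinearMap.range Z.mulVecLin := by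
      refine ⟨Pi.single j 1, ?_⟩
      funext i
      simp [Matrix.mulVecLin_apply, Matrix.mulVec_single]
    exact h hm
  choose u hu using hcol
  refine ⟨Matrix.of (fun i j => u j i), ?_⟩
  ext i j
  have := congrFun (hu j) i
  simpa [Matrix.mul_apply, Matrix.mulVec, dotProduct] using this.symm

lemma range_eq_of_factor_rank {m n : ℕ} (P : Matrix (Fin m) (Fin m) ℂ)
    (Z : Matrix (Fin m) (Fin n) ℂ) (C : Matrix (Fin n) (Fin m) ℂ)
    (hfac : P = Z * C) (hrank : Z.rank = P.rank) :
    ∃ U : Matrix (Fin m) (Fin n) ℂ, Z = P * U := by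
  apply factor_of_range_le
  have hle : LinearMap.range P.mulVecLin ≤ LinearMap.range Z.mulVecLin := by
    rw [hfac, Matrix.mulVecLin_mul]
    exact LinearMap.range_comp_le_range _ _
  have heq : LinearMap.range P.mulVecLin = LinearMap.range Z.mulVecLin := by
    apply Submodule.eq_of_le_of_finrank_le hle
    exact le_of_eq hrank
  exact le_of_eq heq.symm

/-- **Theorem 3.27.** Reverse order law for the minimal rank W-weighted weak Drazin inverse:
`Y₃·W·Z₂` is a minimal rank W-weighted weak Drazin inverse of `A·W·B`. -/
theorem minimal_rank_weighted_weak_Drazin_reverse_order {m n : ℕ}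
    (A B : Matrix (Fin m) (Fin n) ℂ) (W : Matrix (Fin n) (Fin m) ℂ)
    (hcomm : (A * W) * (B * W) = (B * W) * (A * W))
    (k : ℕ)
    (hk : k = max (max (matIndex (A * W)) (matIndex (B * W))) (matIndex (A * W * B * W)))
    (Y₃ : Matrix (Fin m) (Fin n) ℂ)
    (hY₃1 : Y₃ * W * (B * W) ^ (k + 1) = (B * W) ^ k)
    (hY₃2 : Y₃.rank = ((B * W) ^ k).rank)
    (Z₂ : Matrix (Fin m) (Fin n) ℂ)
    (hZ₂1 : Z₂ * W * (A * W) ^ (k + 1) = (A * W) ^ k)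
    (hZ₂2 : Z₂.rank = ((A * W) ^ k).rank)
    (hYA : (Y₃ * W) * (A * W) = (A * W) * (Y₃ * W)) :
    (Y₃ * W * Z₂) * W * (A * W * B * W) ^ (k + 1) = (A * W * B * W) ^ k ∧
    (Y₃ * W * Z₂).rank = ((A * W * B * W) ^ k).rank := by
  have hc : Commute (A * W) (B * W) := hcomm
  have hY : Commute (Y₃ * W) (A * W) := hYA
  have hmp : ∀ j : ℕ, (A * W * B * W) ^ j = (A * W) ^ j * (B * W) ^ j := by
    intro j
    rw [Matrix.mul_assoc, hc.mul_pow]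
  -- Part 1
  have h1 : (Y₃ * W * Z₂) * W * (A * W * B * W) ^ (k + 1) = (A * W * B * W) ^ k := by
    calc (Y₃ * W * Z₂) * W * (A * W * B * W) ^ (k + 1)
        = (Y₃ * W) * (Z₂ * W * (A * W) ^ (k + 1)) * (B * W) ^ (k + 1) := by
          rw [hmp]; simp only [Matrix.mul_assoc]
      _ = (Y₃ * W) * (A * W) ^ k * (B * W) ^ (k + 1) := by rw [hZ₂1]
      _ = (A * W) ^ k * (Y₃ * W * (B * W) ^ (k + 1)) := by
          rw [(hY.pow_right k).eq]; simp only [Matrix.mul_assoc]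
      _ = (A * W) ^ k * (B * W) ^ k := by rw [hY₃1]
      _ = (A * W * B * W) ^ k := (hmp k).symm
  refine ⟨h1, ?_⟩
  -- lower bound
  have hlow : ((A * W * B * W) ^ k).rank ≤ (Y₃ * W * Z₂).rank := by
    have h2 : (A * W * B * W) ^ k = (Y₃ * W * Z₂) * (W * (A * W * B * W) ^ (k + 1)) := by
      rw [← Matrix.mul_assoc]; exact h1.symm
    rw [h2]
    exact Matrix.rank_mul_le_left _ _
  -- factorizations
  obtain ⟨U, hU⟩ := range_eq_of_factor_rank ((A * W) ^ k) Z₂ (W * (A * W) ^ (k + 1))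
    (by rw [← Matrix.mul_assoc]; exact hZ₂1.symm) hZ₂2
  obtain ⟨V, hV⟩ := range_eq_of_factor_rank ((B * W) ^ k) Y₃ (W * (B * W) ^ (k + 1))
    (by rw [← Matrix.mul_assoc]; exact hY₃1.symm) hY₃2
  -- upper bound
  have hup : (Y₃ * W * Z₂).rank ≤ ((A * W * B * W) ^ k).rank := by
    have e1 : Y₃ * W * Z₂ = ((A * W) ^ k * (B * W) ^ k) * (V * W * U) := by
      calc Y₃ * W * Z₂ = (Y₃ * W) * (A * W) ^ k * U := by rw [hU, ← Matrix.mul_assoc]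
        _ = (A * W) ^ k * (Y₃ * W) * U := by rw [(hY.pow_right k).eq]
        _ = (A * W) ^ k * ((B * W) ^ k * V * W) * U := by rw [← hV]
        _ = ((A * W) ^ k * (B * W) ^ k) * (V * W * U) := by simp only [Matrix.mul_assoc]
    rw [e1, hmp k]
    exact Matrix.rank_mul_le_left _ _
  exact le_antisymm hup hlow
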